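/- Fix an fLTL\GU formula φ, a U-free subformula ξ ∈ sf(φ), an infinite word w, and R̲, R̄ ⊆ Rec with R̲ ⊆ R(w) ⊆ R̄. Then: (1) if w ∈ L(S_GF(ξ,R̲)) then w ⊨ GFξ, and if w ⊨ GFξ then w ∈ L(S_GF(ξ,R̄)); (2) if w ∈ L(S_FG(ξ,R̲)) then w ⊨ FGξ, and if w ⊨ FGξ then w ∈ L(S_FG(ξ,R̄)); (3) if w ∈ L(S_{G^{⋈p}_ext}(ξ,R̲)) then w ⊨ G^{⋈p}_ext ξ, and if w ⊨ G^{⋈p}_ext ξ then w ∈ L(S_{G^{⋈p}_ext}(ξ,R̄)). -/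

import Mathlib

open Filter

attribute [local instance] Classical.propDecidable

noncomputable section

namespace Paper

/-- Comparison extremes: limit inferior or limit superior. -/
inductive Ext where
  | inf : Ext
  | sup : Ext

/-- Comparison operators `≥` and `>`. -/
inductive Cmp where
  | ge : Cmp
  | gt : Cmp

/-- Interpretation of a comparison operator on reals. -/
def Cmp.rel : Cmp → ℝ → ℝ → Prop
  | .ge, x, y => x ≥ y
  | .gt, x, y => x > y

/-- Cesàro averages of a real sequence. -/
def cesaro (q : ℕ → ℝ) (n : ℕ) : ℝ := (∑ j ∈ Finset.range n, q j) / (n : ℝ)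

/-- `lr_inf`/`lr_sup`: liminf/limsup of the Cesàro averages. -/
def lr : Ext → (ℕ → ℝ) → ℝ
  | .inf, q => Filter.liminf (cesaro q) Filter.atTop
  | .sup, q => Filter.limsup (cesaro q) Filter.atTop

/-- Real-valued indicator of a proposition. -/
def ind (P : Prop) : ℝ := if P then 1 else 0

/-- Formulas of frequency LTL (fLTL) over atomic propositions `Ap`,
in negation normal form. -/
inductive FLTL (Ap : Type) where
  | tt : FLTL Ap
  | ff : FLTL Ap
  | atom (a : Ap) : FLTL Ap
  | natom (a : Ap) : FLTL Ap
  | conj (φ ψ : FLTL Ap) : FLTL Ap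
  | disj (φ ψ : FLTL Ap) : FLTL Ap
  | next (φ : FLTL Ap) : FLTL Ap
  | fut (φ : FLTL Ap) : FLTL Ap
  | glob (φ : FLTL Ap) : FLTL Ap
  | untl (φ ψ : FLTL Ap) : FLTL Ap
  | freq (e : Ext) (c : Cmp) (p : ℚ) (φ : FLTL Ap) : FLTL Ap

/-- Infinite words over the alphabet `2^Ap`. -/
abbrev Word (Ap : Type) := ℕ → Set Ap

/-- The suffix `w^k` of an infinite word. -/
def suffixW {Ap : Type} (w : Word Ap) (k : ℕ) : Word Ap := fun i => w (k + i)

/-- Semantics of fLTL: `Sat φ w` means `w ⊨ φ`. -/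
def Sat {Ap : Type} : FLTL Ap → Word Ap → Prop
  | .tt, _ => True
  | .ff, _ => False
  | .atom a, w => a ∈ w 0
  | .natom a, w => a ∉ w 0
  | .conj φ ψ, w => Sat φ w ∧ Sat ψ w
  | .disj φ ψ, w => Sat φ w ∨ Sat ψ w
  | .next φ, w => Sat φ (suffixW w 1)
  | .fut φ, w => ∃ k, Sat φ (suffixW w k)
  | .glob φ, w => ∀ k, Sat φ (suffixW w k)
  | .untl φ ψ, w => ∃ k, Sat ψ (suffixW w k) ∧ ∀ j < k, Sat φ (suffixW w j)
  | .freq e c p φ, w => c.rel (lr e (fun i => ind (Sat φ (suffixW w i)))) (p : ℝ)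

/-- `U`-free formulas (the grammar `ξ` of the fragment). -/
def UFree {Ap : Type} : FLTL Ap → Prop
  | .conj φ ψ => UFree φ ∧ UFree ψ
  | .disj φ ψ => UFree φ ∧ UFree ψ
  | .next φ => UFree φ
  | .fut φ => UFree φ
  | .glob φ => UFree φ
  | .freq _ _ _ φ => UFree φ
  | .untl _ _ => False
  | _ => True

/-- The fragment fLTL∖GU: no `U` inside the scope of `G` or `G^{⋈p}_ext`. -/
def InFrag {Ap : Type} : FLTL Ap → Prop
  | .conj φ ψ => InFrag φ ∧ InFrag ψ
  | .disj φ ψ => InFrag φ ∧ InFrag ψ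
  | .next φ => InFrag φ
  | .fut φ => InFrag φ
  | .untl φ ψ => InFrag φ ∧ InFrag ψ
  | .glob φ => UFree φ
  | .freq _ _ _ φ => UFree φ
  | _ => True

/-- One-step unfolding `Unf`. -/
def unf {Ap : Type} : FLTL Ap → FLTL Ap
  | .conj φ ψ => .conj (unf φ) (unf ψ)
  | .disj φ ψ => .disj (unf φ) (unf ψ)
  | .fut φ => .disj (unf φ) (.next (.fut φ))
  | .glob φ => .conj (unf φ) (.next (.glob φ))
  | .untl φ ψ => .disj (unf ψ) (.conj (unf φ) (.next (.untl φ ψ)))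
  | .freq e c p φ => .conj .tt (.next (.freq e c p φ))
  | φ => φ

/-- The next-step operator `ψ[ν]` for a letter `ν ⊆ Ap`. -/
def step {Ap : Type} : FLTL Ap → Set Ap → FLTL Ap
  | .conj φ ψ, ν => .conj (step φ ν) (step ψ ν)
  | .disj φ ψ, ν => .disj (step φ ν) (step ψ ν)
  | .atom a, ν => if a ∈ ν then .tt else .ff
  | .natom a, ν => if a ∈ ν then .ff else .tt
  | .next φ, _ => φ
  | φ, _ => φ

/-- Non-Boolean formulas: those that are not conjunctions or disjunctions. -/
def nonBool {Ap : Type} : FLTL Ap → Prop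
  | .conj _ _ => False
  | .disj _ _ => False
  | _ => True

/-- Extension of a propositional assignment (on non-Boolean formulas)
through conjunction and disjunction; `tt` and `ff` get their truth values. -/
def evalA {Ap : Type} (A : FLTL Ap → Prop) : FLTL Ap → Prop
  | .tt => True
  | .ff => False
  | .conj φ ψ => evalA A φ ∧ evalA A ψ
  | .disj φ ψ => evalA A φ ∨ evalA A ψ
  | φ => A φ

/-- Propositional provability `Φ ⊢ ψ`. -/
def pproves {Ap : Type} (Φ : Set (FLTL Ap)) (ψ : FLTL Ap) : Prop :=
  ∀ A : FLTL Ap → Prop, (∀ χ ∈ Φ, evalA A χ) → evalA A ψ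

/-- Propositional equivalence `≡_P`. -/
def pequiv {Ap : Type} (φ ψ : FLTL Ap) : Prop :=
  pproves {φ} ψ ∧ pproves {ψ} φ

/-- The set of subformulas of a formula (including itself). -/
def subf {Ap : Type} : FLTL Ap → Set (FLTL Ap)
  | .conj φ ψ => insert (.conj φ ψ) (subf φ ∪ subf ψ)
  | .disj φ ψ => insert (.disj φ ψ) (subf φ ∪ subf ψ)
  | .next φ => insert (.next φ) (subf φ)
  | .fut φ => insert (.fut φ) (subf φ)
  | .glob φ => insert (.glob φ) (subf φ)
  | .untl φ ψ => insert (.untl φ ψ) (subf φ ∪ subf ψ)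
  | .freq e c p φ => insert (.freq e c p φ) (subf φ)
  | φ => {φ}

/-- `sf(φ)`: the set of non-Boolean subformulas of `φ`. -/
def sfSet {Ap : Type} (φ : FLTL Ap) : Set (FLTL Ap) := {ψ ∈ subf φ | nonBool ψ}

/-- Formulas of the shapes `Fξ`, `Gξ`, `G^{⋈p}_ext ξ`. -/
def isRecShape {Ap : Type} : FLTL Ap → Prop
  | .fut _ => True
  | .glob _ => True
  | .freq _ _ _ _ => True
  | _ => False

/-- `Rec`: the set of `F`-, `G`-, and `G^{⋈p}_ext`-subformulas of `φ`. -/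
def RecSet {Ap : Type} (φ : FLTL Ap) : Set (FLTL Ap) := {ψ ∈ subf φ | isRecShape ψ}

/-- The defining condition of membership in `R(w)`. -/
def RsatCond {Ap : Type} (w : Word Ap) : FLTL Ap → Prop
  | .fut ξ => Sat (.glob (.fut ξ)) w
  | .glob ξ => Sat (.fut (.glob ξ)) w
  | .freq e c p ξ => Sat (.freq e c p ξ) w
  | _ => False

/-- `R(w)`: elements of `Rec` eventually always satisfied on `w`. -/
def Rsat {Ap : Type} (φ : FLTL Ap) (w : Word Ap) : Set (FLTL Ap) :=
  {ψ ∈ RecSet φ | RsatCond w ψ}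

/-- The threshold `T(w)`: the smallest `T` such that for all `t ≥ T` every
formula of `R(w)` holds at `w^t` and every formula of `Rec ∖ R(w)` fails at `w^t`. -/
def threshold {Ap : Type} (φ : FLTL Ap) (w : Word Ap) : ℕ :=
  sInf {T : ℕ | ∀ t, T ≤ t →
    (∀ ψ ∈ Rsat φ w, Sat ψ (suffixW w t)) ∧
    (∀ ψ ∈ RecSet φ, ψ ∉ Rsat φ w → ¬ Sat ψ (suffixW w t))}

/-- Sinks of slave transition systems: `ψ[ν] = ψ` for every letter `ν`. -/
def isSink {Ap : Type} (ψ : FLTL Ap) : Prop := ∀ ν : Set Ap, step ψ ν = ψ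

/-- Run of the slave LTS `S(ξ)` on a finite word: undefined (`none`) as soon as
a transition from a sink would be needed. -/
def slaveRunList {Ap : Type} : FLTL Ap → List (Set Ap) → Option (FLTL Ap)
  | ψ, [] => some ψ
  | ψ, ν :: rest => if isSink ψ then none else slaveRunList (step ψ ν) rest

/-- The finite word `w[i] w[i+1] ⋯ w[i+len-1]`. -/
def segWord {Ap : Type} (w : Word Ap) (i len : ℕ) : List (Set Ap) :=
  (List.range len).map (fun k => w (i + k))

/-- `S(ξ)(w[i..j])`: the state of the slave LTS after reading `w[i]⋯w[j]`. -/
def readSeg {Ap : Type} (ξ : FLTL Ap) (w : Word Ap) (i j : ℕ) : Option (FLTL Ap) :=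
  slaveRunList ξ (segWord w i (j + 1 - i))

/-- The state, at time `n`, of the slave token born at time `b`
(having read `w[b]⋯w[n-1]`). -/
def tokState {Ap : Type} (ξ : FLTL Ap) (w : Word Ap) (b n : ℕ) : Option (FLTL Ap) :=
  slaveRunList ξ (segWord w b (n - b))

/-- `Sat(R)`: positions from which the slave run reaches an `R`-provable state. -/
def SatSet {Ap : Type} (R : Set (FLTL Ap)) (ξ : FLTL Ap) (w : Word Ap) : Set ℕ :=
  {i | ∃ j ≥ i, ∃ ψ, readSeg ξ w i j = some ψ ∧ pproves R ψ}

/-- The token (subset-construction) run of the slave automata for `ξ` on `w`: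
at each step all non-sink tokens move and a fresh token is put on `ξ`. -/
def tokenSet {Ap : Type} (ξ : FLTL Ap) (w : Word Ap) : ℕ → Set (FLTL Ap)
  | 0 => {ξ}
  | n + 1 => insert ξ ((fun ψ => step ψ (w n)) '' {ψ ∈ tokenSet ξ w n | ¬ isSink ψ})

/-- Acceptance of the Büchi slave automaton `S_GF(ξ,R)`:
infinitely often some token lies in an accepting (R-provable) sink. -/
def buchiAcc {Ap : Type} (R : Set (FLTL Ap)) (ξ : FLTL Ap) (w : Word Ap) : Prop :=
  ∃ᶠ n in atTop, ∃ ψ ∈ tokenSet ξ w n, isSink ψ ∧ pproves R ψ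

/-- Acceptance of the co-Büchi slave automaton `S_FG(ξ,R)`:
only finitely often some token lies in a rejecting (non-R-provable) sink. -/
def coBuchiAcc {Ap : Type} (R : Set (FLTL Ap)) (ξ : FLTL Ap) (w : Word Ap) : Prop :=
  ∀ᶠ n in atTop, ¬ ∃ ψ ∈ tokenSet ξ w n, isSink ψ ∧ ¬ pproves R ψ

/-- The counting function (state of the mean-payoff slave automaton) at time `n`:
the number of tokens currently in state `ψ`. -/
def tokenCount {Ap : Type} (ξ : FLTL Ap) (w : Word Ap) (n : ℕ) (ψ : FLTL Ap) : ℕ :=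
  ((Finset.range (n + 1)).filter (fun b => tokState ξ w b n = some ψ)).card

/-- The reward `r(R)` of a counting state: total number of tokens in
accepting (R-provable) sinks. -/
def mpRewardFn {Ap : Type} (R : Set (FLTL Ap)) (f : FLTL Ap → ℕ) : ℝ :=
  ∑' ψ : {χ : FLTL Ap // isSink χ ∧ pproves R χ}, (f ψ.1 : ℝ)

/-- Acceptance of the mean-payoff slave automaton `S_{G^{⋈p}_ext}(ξ,R)`. -/
def mpAcc {Ap : Type} (R : Set (FLTL Ap)) (ξ : FLTL Ap) (w : Word Ap)
    (e : Ext) (c : Cmp) (p : ℚ) : Prop :=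
  c.rel (lr e (fun n => mpRewardFn R (tokenCount ξ w n))) (p : ℝ)

/-- Acceptance of the slave automaton for a formula of `Rec`, with assumptions `R`. -/
def slaveAccept {Ap : Type} (R : Set (FLTL Ap)) (w : Word Ap) : FLTL Ap → Prop
  | .fut ξ => buchiAcc R ξ w
  | .glob ξ => coBuchiAcc R ξ w
  | .freq e c p ξ => mpAcc R ξ w e c p
  | _ => True

/-- `w ∈ L(P(R))`: the product of the slaves accepts `w` with the condition
`Acc(R) = ⋀_{ξ ∈ R} Acc_ξ(R)`. -/
def productAccept {Ap : Type} (R : Set (FLTL Ap)) (w : Word Ap) : Prop :=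
  ∀ ψ ∈ R, slaveAccept R w ψ

/-- The run of the master transition system on `w`. -/
def masterRun {Ap : Type} (φ : FLTL Ap) (w : Word Ap) : ℕ → FLTL Ap
  | 0 => φ
  | n + 1 => step (unf (masterRun φ w n)) (w n)

/-- The propositional substitution `χ[X/ff]`: replace each non-Boolean
formula belonging to `X` by `ff`. -/
def substFF {Ap : Type} (X : Set (FLTL Ap)) : FLTL Ap → FLTL Ap
  | .conj φ ψ => .conj (substFF X φ) (substFF X ψ)
  | .disj φ ψ => .disj (substFF X φ) (substFF X ψ)
  | φ => if φ ∈ X then .ff else φ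

/-- The master acceptance condition `Acc_M(R)`: eventually, the current master
formula is provable from `R` together with all tokens of the slaves of
`G`-formulas of `R`, with `Rec ∖ R` substituted by `ff`. -/
def masterAcc {Ap : Type} (φ : FLTL Ap) (R : Set (FLTL Ap)) (w : Word Ap) : Prop :=
  ∀ᶠ n in atTop,
    pproves
      (R ∪ ⋃ (ξ : FLTL Ap) (_ : FLTL.glob ξ ∈ R),
        substFF (RecSet φ \ R) '' tokenSet ξ w n)
      (masterRun φ w n)

/-- `w ∈ L(A)` for the final automaton `A` (master × slave product) of `φ`. -/
def finalAccept {Ap : Type} (φ : FLTL Ap) (w : Word Ap) : Prop :=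
  ∃ R ⊆ RecSet φ, masterAcc φ R w ∧ productAccept R w

/-! ### Auxiliary development for the proof of Lemma 4 -/

section Analysis

variable {u v : ℕ → ℝ} {B C : ℝ}

lemma real_le_of_forall_pos {a b : ℝ} (h : ∀ ε : ℝ, 0 < ε → a ≤ b + ε) : a ≤ b := by
  by_contra hlt
  push_neg at hlt
  have := h ((a - b) / 2) (by linarith)
  linarith

lemma bddU (hB : ∀ n, u n ≤ B) : atTop.IsBoundedUnder (· ≤ ·) u :=
  isBoundedUnder_of ⟨B, hB⟩

lemma bddL (hB : ∀ n, B ≤ u n) : atTop.IsBoundedUnder (· ≥ ·) u :=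
  isBoundedUnder_of ⟨B, hB⟩

lemma liminf_le_liminf_of_le (h : ∀ n, u n ≤ v n) (hu : ∀ n, 0 ≤ u n) (hv : ∀ n, v n ≤ B) :
    liminf u atTop ≤ liminf v atTop :=
  Filter.liminf_le_liminf (Eventually.of_forall h) (bddL hu)
    ((bddU hv).isCoboundedUnder_ge)

lemma limsup_le_limsup_of_le (h : ∀ n, u n ≤ v n) (hu : ∀ n, 0 ≤ u n) (hv : ∀ n, v n ≤ B) :
    limsup u atTop ≤ limsup v atTop :=
  Filter.limsup_le_limsup (Eventually.of_forall h) ((bddL hu).isCoboundedUnder_le)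
    (bddU hv)

lemma liminf_le_liminf_of_tendsto (hu0 : ∀ n, 0 ≤ u n) (huB : ∀ n, u n ≤ B)
    (hv0 : ∀ n, 0 ≤ v n) (hvB : ∀ n, v n ≤ B)
    (h : Tendsto (fun n => u n - v n) atTop (nhds 0)) :
    liminf u atTop ≤ liminf v atTop := by
  apply real_le_of_forall_pos
  intro ε hε
  have hev : ∀ᶠ n in atTop, u n ≤ v n + ε := by
    filter_upwards [(Metric.tendsto_nhds.1 h) ε hε] with n hn
    rw [Real.dist_eq, sub_zero] at hn
    have := abs_lt.1 hn
    linarith [this.2]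
  have h1 : liminf u atTop ≤ liminf (fun n => v n + ε) atTop :=
    Filter.liminf_le_liminf hev (bddL hu0)
      ((bddU (u := fun n => v n + ε) (B := B + ε) (fun n => by simpa using add_le_add_right (hvB n) ε)).isCoboundedUnder_ge)
  have h2 : liminf (fun n => v n + ε) atTop = liminf v atTop + ε :=
    liminf_add_const atTop v ε ((bddU hvB).isCoboundedUnder_ge) (bddL hv0)
  linarith

lemma limsup_le_limsup_of_tendsto (hu0 : ∀ n, 0 ≤ u n) (huB : ∀ n, u n ≤ B)
    (hv0 : ∀ n, 0 ≤ v n) (hvB : ∀ n, v n ≤ B)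
    (h : Tendsto (fun n => u n - v n) atTop (nhds 0)) :
    limsup u atTop ≤ limsup v atTop := by
  apply real_le_of_forall_pos
  intro ε hε
  have hev : ∀ᶠ n in atTop, u n ≤ v n + ε := by
    filter_upwards [(Metric.tendsto_nhds.1 h) ε hε] with n hn
    rw [Real.dist_eq, sub_zero] at hn
    have := abs_lt.1 hn
    linarith [this.2]
  have h1 : limsup u atTop ≤ limsup (fun n => v n + ε) atTop :=
    Filter.limsup_le_limsup hev ((bddL hu0).isCoboundedUnder_le)
      (bddU (u := fun n => v n + ε) (B := B + ε) (fun n => by simpa using add_le_add_right (hvB n) ε))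
  have h2 : limsup (fun n => v n + ε) atTop = limsup v atTop + ε :=
    limsup_add_const atTop v ε (bddU hvB) ((bddL hv0).isCoboundedUnder_le)
  linarith

lemma lr_eq_of_tendsto (hu0 : ∀ n, 0 ≤ u n) (huB : ∀ n, u n ≤ B)
    (hv0 : ∀ n, 0 ≤ v n) (hvB : ∀ n, v n ≤ B)
    (h : Tendsto (fun n => u n - v n) atTop (nhds 0)) :
    liminf u atTop = liminf v atTop ∧ limsup u atTop = limsup v atTop := by
  have h' : Tendsto (fun n => v n - u n) atTop (nhds 0) := by
    have := h.neg
    simpa using this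
  exact ⟨le_antisymm (liminf_le_liminf_of_tendsto hu0 huB hv0 hvB h)
      (liminf_le_liminf_of_tendsto hv0 hvB hu0 huB h'),
    le_antisymm (limsup_le_limsup_of_tendsto hu0 huB hv0 hvB h)
      (limsup_le_limsup_of_tendsto hv0 hvB hu0 huB h')⟩

end Analysis

-- paste ana here later
section Ces

variable {q r : ℕ → ℝ} {B : ℝ}

lemma cesaro_nonneg (hq : ∀ i, 0 ≤ q i) (n : ℕ) : 0 ≤ cesaro q n :=
  div_nonneg (Finset.sum_nonneg fun i _ => hq i) (Nat.cast_nonneg n)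

lemma cesaro_le (hB : 0 ≤ B) (hq : ∀ i, q i ≤ B) (n : ℕ) : cesaro q n ≤ B := by
  rcases Nat.eq_zero_or_pos n with rfl | hn
  · simp [cesaro, hB]
  · rw [cesaro, div_le_iff₀ (by exact_mod_cast hn)]
    calc ∑ j ∈ Finset.range n, q j ≤ ∑ j ∈ Finset.range n, B :=
          Finset.sum_le_sum fun i _ => hq i
      _ = n * B := by simp [mul_comm]
      _ = B * n := by ring

lemma lr_shift (hq0 : ∀ i, 0 ≤ q i) (hq1 : ∀ i, q i ≤ 1) (t : ℕ) (e : Ext) :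
    lr e (fun i => q (t + i)) = lr e q := by
  set S : ℕ → ℝ := fun m => ∑ j ∈ Finset.range m, q j with hS
  have hSnn : ∀ m, 0 ≤ S m := fun m => Finset.sum_nonneg fun i _ => hq0 i
  have hSle : ∀ m, S m ≤ m := by
    intro m
    calc S m ≤ ∑ j ∈ Finset.range m, (1:ℝ) := Finset.sum_le_sum fun i _ => hq1 i
      _ = m := by simp
  set u := cesaro (fun i => q (t + i)) with hu
  set v : ℕ → ℝ := fun n => cesaro q (n + t) with hv
  have hkey : Tendsto (fun n => u n - v n) atTop (nhds 0) := by
    refine squeeze_zero_norm' (a := fun n : ℕ => (2 * (t:ℝ)) / (n:ℝ)) ?_ (tendsto_const_div_atTop_nhds_zero_nat _)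
    · filter_upwards [eventually_ge_atTop 1] with n hn
      have hnp : (0:ℝ) < n := by exact_mod_cast hn
      have hntp : (0:ℝ) < (n:ℝ) + t := by positivity
      have hsum : ∑ j ∈ Finset.range n, q (t + j) = S (t + n) - S t := by
        rw [hS]
        simp only []
        rw [Finset.sum_range_add q t n]
        ring
      have hun : u n = (S (t + n) - S t) / n := by
        rw [hu, cesaro, hsum]
      have hvn : v n = S (t + n) / ((n:ℝ) + t) := by
        rw [hv]
        simp only [cesaro]
        rw [Nat.add_comm n t]
        push_cast
        ring_nf
        simp only [hS]; ring
      rw [hun, hvn]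
      have h1 : (S (t + n) - S t) / n - S (t + n) / ((n:ℝ) + t)
          = (S (t + n) * t - S t * ((n:ℝ) + t)) / (n * ((n:ℝ) + t)) := by
        field_simp
        ring
      rw [h1, Real.norm_eq_abs]
      have haund : |S (t + n) * t - S t * ((n:ℝ) + t)| ≤ 2 * t * ((n:ℝ) + t) := by
        have h2 : |S (t + n) * t| ≤ ((n:ℝ) + t) * t := by
          rw [abs_mul, abs_of_nonneg (hSnn _), abs_of_nonneg (by positivity : (0:ℝ) ≤ (t:ℝ))]
          have := hSle (t + n)
          push_cast at this ⊢
          nlinarith [Nat.cast_nonneg (α := ℝ) t]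
        have h3 : |S t * ((n:ℝ) + t)| ≤ (t:ℝ) * ((n:ℝ) + t) := by
          rw [abs_mul, abs_of_nonneg (hSnn _), abs_of_nonneg (le_of_lt hntp)]
          have := hSle t
          nlinarith
        calc |S (t + n) * t - S t * ((n:ℝ) + t)| ≤ |S (t + n) * t| + |S t * ((n:ℝ) + t)| :=
              abs_sub _ _
          _ ≤ ((n:ℝ) + t) * t + (t:ℝ) * ((n:ℝ) + t) := add_le_add h2 h3
          _ = 2 * t * ((n:ℝ) + t) := by ring
      rw [abs_div, abs_of_pos (by positivity : (0:ℝ) < (n:ℝ) * ((n:ℝ) + t))]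
      rw [div_le_div_iff₀ (by positivity) hnp]
      calc |S (t + n) * t - S t * ((n:ℝ) + t)| * n ≤ (2 * t * ((n:ℝ) + t)) * n := by
            apply mul_le_mul_of_nonneg_right haund (le_of_lt hnp)
        _ = 2 * ↑t * (↑n * (↑n + ↑t)) := by ring
  have hu0 : ∀ n, 0 ≤ u n := fun n => cesaro_nonneg (fun i => hq0 _) n
  have hu1 : ∀ n, u n ≤ 1 := fun n => cesaro_le zero_le_one (fun i => hq1 _) n
  have hv0 : ∀ n, 0 ≤ v n := fun n => cesaro_nonneg hq0 _
  have hv1 : ∀ n, v n ≤ 1 := fun n => cesaro_le zero_le_one hq1 _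
  have heq := lr_eq_of_tendsto hu0 hu1 hv0 hv1 hkey
  have hnat_inf : liminf v atTop = liminf (cesaro q) atTop := liminf_nat_add (cesaro q) t
  have hnat_sup : limsup v atTop = limsup (cesaro q) atTop := limsup_nat_add (cesaro q) t
  cases e
  · show liminf _ atTop = liminf _ atTop
    rw [← hnat_inf, ← heq.1]
  · show limsup _ atTop = limsup _ atTop
    rw [← hnat_sup, ← heq.2]

lemma lr_eq_of_partial_close (hq0 : ∀ i, 0 ≤ q i) (hqB : ∀ i, q i ≤ B)
    (hr0 : ∀ i, 0 ≤ r i) (hrB : ∀ i, r i ≤ B) (C : ℝ)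
    (h : ∀ n, |∑ j ∈ Finset.range n, q j - ∑ j ∈ Finset.range n, r j| ≤ C) (e : Ext) :
    lr e q = lr e r := by
  have hB0 : (0:ℝ) ≤ B := le_trans (hq0 0) (hqB 0)
  have hkey : Tendsto (fun n => cesaro q n - cesaro r n) atTop (nhds 0) := by
    refine squeeze_zero_norm' (a := fun n : ℕ => C / (n:ℝ)) ?_ (tendsto_const_div_atTop_nhds_zero_nat _)
    · filter_upwards [eventually_ge_atTop 1] with n hn
      have hnp : (0:ℝ) < n := by exact_mod_cast hn
      have : cesaro q n - cesaro r n
          = (∑ j ∈ Finset.range n, q j - ∑ j ∈ Finset.range n, r j) / n := by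
        simp [cesaro, sub_div]
      rw [this, Real.norm_eq_abs, abs_div, abs_of_pos hnp]
      exact (div_le_div_iff_of_pos_right hnp).2 (h n)
  have := lr_eq_of_tendsto (cesaro_nonneg hq0) (cesaro_le hB0 hqB)
    (cesaro_nonneg hr0) (cesaro_le hB0 hrB) hkey
  cases e
  · exact this.1
  · exact this.2

end Ces

variable {Ap : Type}

/-- X-height of a formula: number of steps before the slave run is guaranteed to sink. -/
def htF : FLTL Ap → ℕ
  | .conj φ ψ => max (htF φ) (htF ψ)
  | .disj φ ψ => max (htF φ) (htF ψ)
  | .atom _ => 1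
  | .natom _ => 1
  | .next φ => htF φ + 1
  | _ => 0

lemma step_of_htF_zero {χ : FLTL Ap} (h : htF χ = 0) (ν : Set Ap) : step χ ν = χ := by
  induction χ with
  | conj φ ψ ih1 ih2 =>
    simp only [htF, Nat.max_eq_zero_iff] at h
    simp [step, ih1 h.1, ih2 h.2]
  | disj φ ψ ih1 ih2 =>
    simp only [htF, Nat.max_eq_zero_iff] at h
    simp [step, ih1 h.1, ih2 h.2]
  | atom a => simp [htF] at h
  | natom a => simp [htF] at h
  | next φ ih => simp [htF] at h
  | _ => rfl

lemma htF_step (χ : FLTL Ap) (ν : Set Ap) : htF (step χ ν) ≤ htF χ - 1 := by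
  induction χ with
  | conj φ ψ ih1 ih2 => simp only [step, htF]; omega
  | disj φ ψ ih1 ih2 => simp only [step, htF]; omega
  | atom a => simp only [step]; split <;> simp [htF]
  | natom a => simp only [step]; split <;> simp [htF]
  | next φ => simp [step, htF]
  | _ => simp [step, htF]

lemma isSink_of_htF_zero {χ : FLTL Ap} (h : htF χ = 0) : isSink χ :=
  fun ν => step_of_htF_zero h ν

lemma htF_zero_of_isSink {χ : FLTL Ap} (h : isSink χ) : htF χ = 0 := by
  by_contra hne
  have h1 := htF_step χ ∅
  rw [h ∅] at h1
  omega

lemma isSink_iff_htF {χ : FLTL Ap} : isSink χ ↔ htF χ = 0 :=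
  ⟨htF_zero_of_isSink, isSink_of_htF_zero⟩

/-- The run of the slave LTS started in `χ` at time `t`, after `m` steps. -/
def runF (w : Word Ap) : FLTL Ap → ℕ → ℕ → FLTL Ap
  | χ, _, 0 => χ
  | χ, t, m + 1 => runF w (step χ (w t)) (t + 1) m

@[simp] lemma runF_zero (w : Word Ap) (χ t) : runF w χ t 0 = χ := rfl

lemma runF_succ (w : Word Ap) (χ t m) :
    runF w χ t (m + 1) = runF w (step χ (w t)) (t + 1) m := rfl

lemma runF_succ' (w : Word Ap) (χ : FLTL Ap) (t m : ℕ) :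
    runF w χ t (m + 1) = step (runF w χ t m) (w (t + m)) := by
  induction m generalizing χ t with
  | zero => simp [runF]
  | succ m ih =>
    rw [runF_succ, ih]
    rw [show t + 1 + m = t + (m + 1) by omega]
    rfl

lemma htF_runF (w : Word Ap) (χ : FLTL Ap) (t m : ℕ) :
    htF (runF w χ t m) ≤ htF χ - m := by
  induction m generalizing χ t with
  | zero => simp
  | succ m ih =>
    rw [runF_succ]
    have h1 := ih (step χ (w t)) (t + 1)
    have h2 := htF_step χ (w t)
    omega

@[simp] lemma segWord_zero (w : Word Ap) (t : ℕ) : segWord w t 0 = [] := by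
  simp [segWord]

lemma segWord_succ (w : Word Ap) (t m : ℕ) :
    segWord w t (m + 1) = w t :: segWord w (t + 1) m := by
  simp only [segWord, List.range_succ_eq_map, List.map_cons, List.map_map, Nat.add_zero]
  congr 1
  apply List.map_congr_left
  intro k _
  show w (t + (k + 1)) = w (t + 1 + k)
  rw [show t + (k + 1) = t + 1 + k from by omega]

lemma slaveRunList_seg_some (w : Word Ap) :
    ∀ (m : ℕ) (χ : FLTL Ap) (t : ℕ) (ψ : FLTL Ap),
      slaveRunList χ (segWord w t m) = some ψ ↔
        (ψ = runF w χ t m ∧ ∀ k < m, ¬ isSink (runF w χ t k)) := by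
  intro m
  induction m with
  | zero =>
    intro χ t ψ
    simp only [segWord_zero, slaveRunList, runF_zero]
    constructor
    · rintro h; exact ⟨(Option.some_inj.1 h).symm, by omega⟩
    · rintro ⟨rfl, -⟩; rfl
  | succ m ih =>
    intro χ t ψ
    rw [segWord_succ]
    simp only [slaveRunList]
    by_cases hs : isSink χ
    · simp only [hs, if_true]
      constructor
      · intro h; exact absurd h (by simp)
      · rintro ⟨-, hk⟩
        exact absurd hs (by simpa using hk 0 (by omega))
    · simp only [hs, if_false]
      rw [ih (step χ (w t)) (t + 1) ψ]
      constructor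
      · rintro ⟨rfl, hk⟩
        refine ⟨rfl, ?_⟩
        intro k hkm
        match k with
        | 0 => simpa using hs
        | k + 1 => exact hk k (by omega)
      · rintro ⟨rfl, hk⟩
        exact ⟨rfl, fun k hkm => hk (k + 1) (by omega)⟩

lemma tokState_some_iff {w : Word Ap} {ξ ψ : FLTL Ap} {b n : ℕ} (hb : b ≤ n) :
    tokState ξ w b n = some ψ ↔
      (ψ = runF w ξ b (n - b) ∧ ∀ k < n - b, ¬ isSink (runF w ξ b k)) := by
  exact slaveRunList_seg_some w (n - b) ξ b ψ

lemma tokState_self (w : Word Ap) (ξ : FLTL Ap) (b : ℕ) : tokState ξ w b b = some ξ := by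
  simp [tokState, slaveRunList]

lemma tokState_sink_le {w : Word Ap} {ξ ψ : FLTL Ap} {b n : ℕ} (hb : b ≤ n)
    (h : tokState ξ w b n = some ψ) (hs : isSink ψ) : n - b ≤ htF ξ := by
  rw [tokState_some_iff hb] at h
  by_contra hlt
  push_neg at hlt
  have : ¬ isSink (runF w ξ b (htF ξ)) := h.2 (htF ξ) hlt
  exact this (isSink_of_htF_zero (by have := htF_runF w ξ b (htF ξ); omega))

lemma exists_sink_time (w : Word Ap) (ξ : FLTL Ap) (b : ℕ) :
    ∃ m ≤ htF ξ, isSink (runF w ξ b m) ∧ ∀ k < m, ¬ isSink (runF w ξ b k) := by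
  have hex : ∃ m, isSink (runF w ξ b m) :=
    ⟨htF ξ, isSink_of_htF_zero (by have := htF_runF w ξ b (htF ξ); omega)⟩
  classical
  refine ⟨Nat.find hex, ?_, Nat.find_spec hex, fun k hk => Nat.find_min hex hk⟩
  exact Nat.find_min' hex (isSink_of_htF_zero (by have := htF_runF w ξ b (htF ξ); omega))

lemma tokState_of_sink_time {w : Word Ap} {ξ : FLTL Ap} {b m : ℕ}
    (hmin : ∀ k < m, ¬ isSink (runF w ξ b k)) :
    tokState ξ w b (b + m) = some (runF w ξ b m) := by
  rw [tokState_some_iff (by omega)]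
  have hm : b + m - b = m := by omega
  rw [hm]
  exact ⟨rfl, hmin⟩

lemma tokenSet_eq (ξ : FLTL Ap) (w : Word Ap) :
    ∀ n, tokenSet ξ w n = {ψ | ∃ b ≤ n, tokState ξ w b n = some ψ} := by
  intro n
  induction n with
  | zero =>
    ext ψ
    simp only [tokenSet, Set.mem_singleton_iff, Set.mem_setOf_eq]
    constructor
    · rintro rfl; exact ⟨0, le_refl _, tokState_self _ _ 0⟩
    · rintro ⟨b, hb, h⟩
      interval_cases b
      rw [tokState_self _ _ 0] at h
      exact (Option.some_inj.1 h).symm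
  | succ n ih =>
    have hstep : ∀ b ψ', b ≤ n →
        (tokState ξ w b (n + 1) = some ψ' ↔
          ∃ ψ, tokState ξ w b n = some ψ ∧ ¬ isSink ψ ∧ ψ' = step ψ (w n)) := by
      intro b ψ' hb
      rw [tokState_some_iff (by omega)]
      have h1 : n + 1 - b = (n - b) + 1 := by omega
      have h2 : b + (n - b) = n := by omega
      rw [h1, runF_succ' w ξ b (n - b), h2]
      constructor
      · rintro ⟨rfl, hk⟩
        refine ⟨runF w ξ b (n - b), ?_, hk (n - b) (by omega), rfl⟩
        rw [tokState_some_iff hb]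
        exact ⟨rfl, fun k hkk => hk k (by omega)⟩
      · rintro ⟨ψ, hts, hns, rfl⟩
        rw [tokState_some_iff hb] at hts
        obtain ⟨rfl, hk⟩ := hts
        refine ⟨rfl, ?_⟩
        intro k hkk
        rcases Nat.lt_or_ge k (n - b) with h | h
        · exact hk k h
        · have : k = n - b := by omega
          subst this; exact hns
    ext ψ'
    simp only [tokenSet, Set.mem_insert_iff, Set.mem_image, Set.mem_setOf_eq, Set.mem_sep_iff, ih]
    constructor
    · rintro (rfl | ⟨ψ, ⟨⟨b, hb, hts⟩, hns⟩, rfl⟩)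
      · exact ⟨n + 1, le_refl _, tokState_self _ _ (n + 1)⟩
      · exact ⟨b, by omega, (hstep b _ hb).2 ⟨ψ, hts, hns, rfl⟩⟩
    · rintro ⟨b, hb, hts⟩
      rcases Nat.lt_or_ge b (n + 1) with h | h
      · right
        obtain ⟨ψ, hts', hns, rfl⟩ := (hstep b ψ' (by omega)).1 hts
        exact ⟨ψ, ⟨⟨b, by omega, hts'⟩, hns⟩, rfl⟩
      · left
        have : b = n + 1 := by omega
        subst this
        rw [tokState_self _ _ (n + 1)] at hts
        exact (Option.some_inj.1 hts).symm

/-! Subformula lemmas -/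

lemma self_mem_subf (χ : FLTL Ap) : χ ∈ subf χ := by
  cases χ <;> simp [subf]

lemma subf_trans {χ χ' : FLTL Ap} (h : χ' ∈ subf χ) : subf χ' ⊆ subf χ := by
  induction χ with
  | conj φ ψ ih1 ih2 =>
    simp only [subf, Set.mem_insert_iff, Set.mem_union] at h
    rcases h with rfl | h | h
    · exact subset_refl _
    · exact (ih1 h).trans (by intro x hx; simp [subf]; tauto)
    · exact (ih2 h).trans (by intro x hx; simp [subf]; tauto)
  | disj φ ψ ih1 ih2 =>
    simp only [subf, Set.mem_insert_iff, Set.mem_union] at h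
    rcases h with rfl | h | h
    · exact subset_refl _
    · exact (ih1 h).trans (by intro x hx; simp [subf]; tauto)
    · exact (ih2 h).trans (by intro x hx; simp [subf]; tauto)
  | next φ ih =>
    simp only [subf, Set.mem_insert_iff] at h
    rcases h with rfl | h
    · exact subset_refl _
    · exact (ih h).trans (by intro x hx; simp [subf]; tauto)
  | fut φ ih =>
    simp only [subf, Set.mem_insert_iff] at h
    rcases h with rfl | h
    · exact subset_refl _
    · exact (ih h).trans (by intro x hx; simp [subf]; tauto)
  | glob φ ih =>
    simp only [subf, Set.mem_insert_iff] at h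
    rcases h with rfl | h
    · exact subset_refl _
    · exact (ih h).trans (by intro x hx; simp [subf]; tauto)
  | untl φ ψ ih1 ih2 =>
    simp only [subf, Set.mem_insert_iff, Set.mem_union] at h
    rcases h with rfl | h | h
    · exact subset_refl _
    · exact (ih1 h).trans (by intro x hx; simp [subf]; tauto)
    · exact (ih2 h).trans (by intro x hx; simp [subf]; tauto)
  | freq e c p φ ih =>
    simp only [subf, Set.mem_insert_iff] at h
    rcases h with rfl | h
    · exact subset_refl _
    · exact (ih h).trans (by intro x hx; simp [subf]; tauto)
  | _ =>
    simp only [subf, Set.mem_singleton_iff] at h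
    subst h
    exact subset_refl _

lemma subf_finite (χ : FLTL Ap) : (subf χ).Finite := by
  induction χ with
  | conj φ ψ ih1 ih2 => exact Set.Finite.insert _ (ih1.union ih2)
  | disj φ ψ ih1 ih2 => exact Set.Finite.insert _ (ih1.union ih2)
  | next φ ih => exact Set.Finite.insert _ ih
  | fut φ ih => exact Set.Finite.insert _ ih
  | glob φ ih => exact Set.Finite.insert _ ih
  | untl φ ψ ih1 ih2 => exact Set.Finite.insert _ (ih1.union ih2)
  | freq e c p φ ih => exact Set.Finite.insert _ ih
  | _ => exact Set.finite_singleton _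

/-- All rec-shaped subformulas lie in `Φ`. -/
def recsubOK (Φ : Set (FLTL Ap)) (χ : FLTL Ap) : Prop :=
  ∀ χ' ∈ subf χ, isRecShape χ' → χ' ∈ Φ

lemma recsubOK_conj_left {Φ} {φ ψ : FLTL Ap} (h : recsubOK Φ (.conj φ ψ)) : recsubOK Φ φ :=
  fun χ' hχ' => h χ' (by simp [subf]; tauto)

lemma recsubOK_conj_right {Φ} {φ ψ : FLTL Ap} (h : recsubOK Φ (.conj φ ψ)) : recsubOK Φ ψ :=
  fun χ' hχ' => h χ' (by simp [subf]; tauto)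

lemma recsubOK_disj_left {Φ} {φ ψ : FLTL Ap} (h : recsubOK Φ (.disj φ ψ)) : recsubOK Φ φ :=
  fun χ' hχ' => h χ' (by simp [subf]; tauto)

lemma recsubOK_disj_right {Φ} {φ ψ : FLTL Ap} (h : recsubOK Φ (.disj φ ψ)) : recsubOK Φ ψ :=
  fun χ' hχ' => h χ' (by simp [subf]; tauto)

lemma recsubOK_next {Φ} {φ : FLTL Ap} (h : recsubOK Φ (.next φ)) : recsubOK Φ φ :=
  fun χ' hχ' => h χ' (by simp [subf]; tauto)

lemma rec_subf_step {χ χ' : FLTL Ap} {ν : Set Ap}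
    (h : χ' ∈ subf (step χ ν)) (hshape : isRecShape χ') : χ' ∈ subf χ := by
  induction χ with
  | conj φ ψ ih1 ih2 =>
    simp only [step, subf, Set.mem_insert_iff, Set.mem_union] at h ⊢
    rcases h with rfl | h | h
    · exact absurd hshape (by simp [isRecShape])
    · exact Or.inr (Or.inl (ih1 h))
    · exact Or.inr (Or.inr (ih2 h))
  | disj φ ψ ih1 ih2 =>
    simp only [step, subf, Set.mem_insert_iff, Set.mem_union] at h ⊢
    rcases h with rfl | h | h
    · exact absurd hshape (by simp [isRecShape])
    · exact Or.inr (Or.inl (ih1 h))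
    · exact Or.inr (Or.inr (ih2 h))
  | atom a =>
    simp only [step] at h
    split at h <;> simp_all [subf, isRecShape]
  | natom a =>
    simp only [step] at h
    split at h <;> simp_all [subf, isRecShape]
  | next φ ih =>
    simp only [step] at h
    simp [subf]
    exact Or.inr h
  | _ => simpa [step] using h

lemma recsubOK_step {Φ} {χ : FLTL Ap} {ν : Set Ap} (h : recsubOK Φ χ) :
    recsubOK Φ (step χ ν) :=
  fun χ' hχ' hsh => h χ' (rec_subf_step hχ' hsh) hsh

lemma UFree_step {χ : FLTL Ap} {ν : Set Ap} (h : UFree χ) : UFree (step χ ν) := by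
  induction χ with
  | conj φ ψ ih1 ih2 => exact ⟨ih1 h.1, ih2 h.2⟩
  | disj φ ψ ih1 ih2 => exact ⟨ih1 h.1, ih2 h.2⟩
  | atom a => simp only [step]; split <;> trivial
  | natom a => simp only [step]; split <;> trivial
  | next φ ih => exact h
  | _ => exact h

lemma recsubOK_runF {Φ} {w : Word Ap} {χ : FLTL Ap} (h : recsubOK Φ χ) (t m : ℕ) :
    recsubOK Φ (runF w χ t m) := by
  induction m generalizing χ t with
  | zero => exact h
  | succ m ih => exact ih (recsubOK_step h) (t + 1)

lemma UFree_runF {w : Word Ap} {χ : FLTL Ap} (h : UFree χ) (t m : ℕ) :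
    UFree (runF w χ t m) := by
  induction m generalizing χ t with
  | zero => exact h
  | succ m ih => exact ih (UFree_step h) (t + 1)


variable {Ap : Type}

lemma suffixW_suffixW (w : Word Ap) (a b : ℕ) :
    suffixW (suffixW w a) b = suffixW w (a + b) := by
  funext i
  simp [suffixW, Nat.add_assoc]

@[simp] lemma ind_nonneg (P : Prop) : 0 ≤ ind P := by
  unfold ind; split <;> norm_num

@[simp] lemma ind_le_one (P : Prop) : ind P ≤ 1 := by
  unfold ind; split <;> norm_num

lemma pproves_mono {Φ Φ' : Set (FLTL Ap)} (h : Φ ⊆ Φ') {ψ : FLTL Ap}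
    (hp : pproves Φ ψ) : pproves Φ' ψ :=
  fun A hA => hp A fun χ hχ => hA χ (h hχ)

lemma evalA_sat (v : Word Ap) (χ : FLTL Ap) :
    evalA (fun χ' => Sat χ' v) χ ↔ Sat χ v := by
  induction χ with
  | conj φ ψ ih1 ih2 => simp only [evalA, Sat]; rw [ih1, ih2]
  | disj φ ψ ih1 ih2 => simp only [evalA, Sat]; rw [ih1, ih2]
  | tt => simp [evalA, Sat]
  | ff => simp [evalA, Sat]
  | _ => simp [evalA]

lemma isRecShape_of_RsatCond {w : Word Ap} {ψ : FLTL Ap} (h : RsatCond w ψ) :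
    isRecShape ψ := by
  cases ψ <;> simp_all [RsatCond, isRecShape]

lemma evalA_recShape (A : FLTL Ap → Prop) {ψ : FLTL Ap} (h : isRecShape ψ) :
    evalA A ψ ↔ A ψ := by
  cases ψ <;> simp_all [evalA, isRecShape]

/-- The fundamental property of a threshold. -/
def ThresholdProp (φ : FLTL Ap) (w : Word Ap) (T : ℕ) : Prop :=
  ∀ t, T ≤ t →
    (∀ ψ ∈ Rsat φ w, Sat ψ (suffixW w t)) ∧
    (∀ ψ ∈ RecSet φ, ψ ∉ Rsat φ w → ¬ Sat ψ (suffixW w t))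

lemma sat_freq_suffix_iff {w : Word Ap} (e c p) (χ : FLTL Ap) (t : ℕ) :
    Sat (.freq e c p χ) (suffixW w t) ↔ Sat (.freq e c p χ) w := by
  simp only [Sat]
  have h : (fun i => ind (Sat χ (suffixW (suffixW w t) i)))
      = fun i => ind (Sat χ (suffixW w (t + i))) := by
    funext i; rw [suffixW_suffixW]
  rw [h, lr_shift (q := fun i => ind (Sat χ (suffixW w i)))
    (fun i => ind_nonneg _) (fun i => ind_le_one _) t e]

lemma exists_threshold (φ : FLTL Ap) (w : Word Ap) : ∃ T, ThresholdProp φ w T := by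
  have hfin : (RecSet φ).Finite := (subf_finite φ).subset (fun x hx => hx.1)
  have hev : ∀ ψ ∈ RecSet φ, ∀ᶠ t in atTop,
      ((ψ ∈ Rsat φ w → Sat ψ (suffixW w t)) ∧ (ψ ∉ Rsat φ w → ¬ Sat ψ (suffixW w t))) := by
    intro ψ hψ
    by_cases hin : ψ ∈ Rsat φ w
    · -- ψ eventually always satisfied
      have hc : RsatCond w ψ := hin.2
      have hshape : isRecShape ψ := isRecShape_of_RsatCond hc
      cases ψ with
      | fut χ =>
        simp only [RsatCond, Sat] at hc
        apply Eventually.of_forall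
        intro t
        refine ⟨fun _ => ?_, fun hno => absurd hin hno⟩
        obtain ⟨m, hm⟩ := hc t
        rw [suffixW_suffixW] at hm
        simp only [Sat]
        exact ⟨m, by rwa [suffixW_suffixW]⟩
      | glob χ =>
        simp only [RsatCond, Sat] at hc
        obtain ⟨k, hk⟩ := hc
        filter_upwards [eventually_ge_atTop k] with t htk
        refine ⟨fun _ => ?_, fun hno => absurd hin hno⟩
        simp only [Sat]
        intro m
        rw [suffixW_suffixW]
        have := hk (t - k + m)
        rw [suffixW_suffixW] at this
        have harith : k + (t - k + m) = t + m := by omega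
        rwa [harith] at this
      | freq e c p χ =>
        simp only [RsatCond] at hc
        apply Eventually.of_forall
        intro t
        refine ⟨fun _ => ?_, fun hno => absurd hin hno⟩
        rw [sat_freq_suffix_iff]
        exact hc
      | _ => simp [isRecShape] at hshape
    · -- ψ eventually never satisfied
      have hc : ¬ RsatCond w ψ := fun hcc => hin ⟨hψ, hcc⟩
      have hshape : isRecShape ψ := hψ.2
      cases ψ with
      | fut χ =>
        simp only [RsatCond, Sat, not_forall, not_exists] at hc
        obtain ⟨k, hk⟩ := hc
        filter_upwards [eventually_ge_atTop k] with t htk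
        refine ⟨fun hyes => absurd hyes hin, fun _ => ?_⟩
        simp only [Sat, not_exists]
        intro m hm
        rw [suffixW_suffixW] at hm
        have := hk (t - k + m)
        rw [suffixW_suffixW] at this
        have harith : k + (t - k + m) = t + m := by omega
        rw [harith] at this
        exact this hm
      | glob χ =>
        simp only [RsatCond, Sat, not_exists] at hc
        apply Eventually.of_forall
        intro t
        exact ⟨fun hyes => absurd hyes hin, fun _ => hc t⟩
      | freq e c p χ =>
        simp only [RsatCond] at hc
        apply Eventually.of_forall
        intro t
        refine ⟨fun hyes => absurd hyes hin, fun _ => ?_⟩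
        rw [sat_freq_suffix_iff]
        exact hc
      | _ => simp [isRecShape] at hshape
  have hall : ∀ᶠ t in atTop, ∀ ψ ∈ RecSet φ,
      ((ψ ∈ Rsat φ w → Sat ψ (suffixW w t)) ∧ (ψ ∉ Rsat φ w → ¬ Sat ψ (suffixW w t))) :=
    (Filter.eventually_all_finite hfin).2 hev
  obtain ⟨T, hT⟩ := eventually_atTop.1 hall
  refine ⟨T, fun t ht => ⟨fun ψ hψ => (hT t ht ψ hψ.1).1 hψ, fun ψ hψ hno => (hT t ht ψ hψ).2 hno⟩⟩

section Chain

variable {φ : FLTL Ap} {w : Word Ap} {T : ℕ}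

lemma sat_step (hT : ThresholdProp φ w T) :
    ∀ {χ : FLTL Ap} {t : ℕ}, UFree χ → recsubOK (RecSet φ) χ → T ≤ t →
      (Sat χ (suffixW w t) ↔ Sat (step χ (w t)) (suffixW w (t + 1))) := by
  intro χ
  induction χ with
  | tt => intro t _ _ _; simp [Sat, step]
  | ff => intro t _ _ _; simp [Sat, step]
  | atom a =>
    intro t _ _ _
    by_cases h : a ∈ w t <;> simp [step, h, Sat, suffixW]
  | natom a =>
    intro t _ _ _
    by_cases h : a ∈ w t <;> simp [step, h, Sat, suffixW]
  | conj φ₁ φ₂ ih1 ih2 =>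
    intro t hU hrec ht
    simp only [Sat, step]
    rw [ih1 hU.1 (recsubOK_conj_left hrec) ht, ih2 hU.2 (recsubOK_conj_right hrec) ht]
  | disj φ₁ φ₂ ih1 ih2 =>
    intro t hU hrec ht
    simp only [Sat, step]
    rw [ih1 hU.1 (recsubOK_disj_left hrec) ht, ih2 hU.2 (recsubOK_disj_right hrec) ht]
  | next φ₁ ih =>
    intro t _ _ _
    simp only [Sat, step, suffixW_suffixW]
  | untl φ₁ φ₂ ih1 ih2 =>
    intro t hU _ _
    exact absurd hU (by simp [UFree])
  | fut χ ih =>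
    intro t _ hrec ht
    have hmem : FLTL.fut χ ∈ RecSet φ := hrec _ (self_mem_subf _) trivial
    show Sat (.fut χ) (suffixW w t) ↔ Sat (.fut χ) (suffixW w (t + 1))
    by_cases hin : FLTL.fut χ ∈ Rsat φ w
    · exact iff_of_true ((hT t ht).1 _ hin) ((hT (t+1) (by omega)).1 _ hin)
    · exact iff_of_false ((hT t ht).2 _ hmem hin) ((hT (t+1) (by omega)).2 _ hmem hin)
  | glob χ ih =>
    intro t _ hrec ht
    have hmem : FLTL.glob χ ∈ RecSet φ := hrec _ (self_mem_subf _) trivial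
    show Sat (.glob χ) (suffixW w t) ↔ Sat (.glob χ) (suffixW w (t + 1))
    by_cases hin : FLTL.glob χ ∈ Rsat φ w
    · exact iff_of_true ((hT t ht).1 _ hin) ((hT (t+1) (by omega)).1 _ hin)
    · exact iff_of_false ((hT t ht).2 _ hmem hin) ((hT (t+1) (by omega)).2 _ hmem hin)
  | freq e c p χ ih =>
    intro t _ hrec ht
    show Sat (.freq e c p χ) (suffixW w t) ↔ Sat (.freq e c p χ) (suffixW w (t + 1))
    rw [sat_freq_suffix_iff, sat_freq_suffix_iff]

lemma sat_runF (hT : ThresholdProp φ w T) {χ : FLTL Ap} (m : ℕ) :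
    ∀ {t : ℕ}, UFree χ → recsubOK (RecSet φ) χ → T ≤ t →
      (Sat χ (suffixW w t) ↔ Sat (runF w χ t m) (suffixW w (t + m))) := by
  induction m generalizing χ with
  | zero => intro t _ _ _; simp
  | succ m ih =>
    intro t hU hrec ht
    rw [sat_step hT hU hrec ht]
    rw [runF_succ, ih (UFree_step hU) (recsubOK_step hrec) (by omega)]
    rw [show t + 1 + m = t + (m + 1) from by omega]

lemma pproves_imp_sat (hT : ThresholdProp φ w T) {χ : FLTL Ap} {t : ℕ}
    (hp : pproves (Rsat φ w) χ) (ht : T ≤ t) : Sat χ (suffixW w t) := by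
  rw [← evalA_sat (suffixW w t) χ]
  apply hp
  intro χ' hχ'
  rw [evalA_recShape _ (isRecShape_of_RsatCond hχ'.2)]
  exact (hT t ht).1 χ' hχ'

lemma sat_imp_pproves (hT : ThresholdProp φ w T) :
    ∀ {χ : FLTL Ap} {t : ℕ}, htF χ = 0 → UFree χ → recsubOK (RecSet φ) χ → T ≤ t →
      Sat χ (suffixW w t) → pproves (Rsat φ w) χ := by
  intro χ
  induction χ with
  | tt => intro t _ _ _ _ _; intro A hA; trivial
  | ff => intro t _ _ _ _ hs; exact absurd hs (by simp [Sat])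
  | atom a => intro t hh; simp [htF] at hh
  | natom a => intro t hh; simp [htF] at hh
  | next φ₁ ih => intro t hh; simp [htF] at hh
  | untl φ₁ φ₂ ih1 ih2 => intro t _ hU; exact absurd hU (by simp [UFree])
  | conj φ₁ φ₂ ih1 ih2 =>
    intro t hh hU hrec ht hs
    simp only [htF, Nat.max_eq_zero_iff] at hh
    have h1 := ih1 hh.1 hU.1 (recsubOK_conj_left hrec) ht hs.1
    have h2 := ih2 hh.2 hU.2 (recsubOK_conj_right hrec) ht hs.2
    intro A hA
    exact ⟨h1 A hA, h2 A hA⟩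
  | disj φ₁ φ₂ ih1 ih2 =>
    intro t hh hU hrec ht hs
    simp only [htF, Nat.max_eq_zero_iff] at hh
    cases hs with
    | inl hs1 =>
      have h1 := ih1 hh.1 hU.1 (recsubOK_disj_left hrec) ht hs1
      intro A hA
      exact Or.inl (h1 A hA)
    | inr hs2 =>
      have h2 := ih2 hh.2 hU.2 (recsubOK_disj_right hrec) ht hs2
      intro A hA
      exact Or.inr (h2 A hA)
  | fut χ ih =>
    intro t _ _ hrec ht hs
    have hmem : FLTL.fut χ ∈ RecSet φ := hrec _ (self_mem_subf _) trivial
    have hin : FLTL.fut χ ∈ Rsat φ w := by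
      by_contra hno
      exact (hT t ht).2 _ hmem hno hs
    intro A hA
    exact hA _ hin
  | glob χ ih =>
    intro t _ _ hrec ht hs
    have hmem : FLTL.glob χ ∈ RecSet φ := hrec _ (self_mem_subf _) trivial
    have hin : FLTL.glob χ ∈ Rsat φ w := by
      by_contra hno
      exact (hT t ht).2 _ hmem hno hs
    intro A hA
    exact hA _ hin
  | freq e c p χ ih =>
    intro t _ _ hrec ht hs
    have hmem : FLTL.freq e c p χ ∈ RecSet φ := hrec _ (self_mem_subf _) trivial
    have hin : FLTL.freq e c p χ ∈ Rsat φ w := by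
      by_contra hno
      exact (hT t ht).2 _ hmem hno hs
    intro A hA
    exact hA _ hin

/-- The core correspondence: provability of a sink token vs satisfaction at its birth date. -/
lemma token_core (hT : ThresholdProp φ w T) {ξ ψ : FLTL Ap} (hU : UFree ξ)
    (hrec : recsubOK (RecSet φ) ξ) {b n : ℕ} (hTb : T ≤ b) (hbn : b ≤ n)
    (hts : tokState ξ w b n = some ψ) (hsink : isSink ψ) :
    (pproves (Rsat φ w) ψ ↔ Sat ξ (suffixW w b)) := by
  obtain ⟨hψ, -⟩ := (tokState_some_iff hbn).1 hts
  subst hψ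
  have hchain := sat_runF hT (n - b) hU hrec hTb (t := b)
  rw [show b + (n - b) = n from by omega] at hchain
  constructor
  · intro hp
    rw [hchain]
    exact pproves_imp_sat hT hp (by omega)
  · intro hs
    rw [hchain] at hs
    exact sat_imp_pproves hT (htF_zero_of_isSink hsink) (UFree_runF hU b (n - b))
      (recsubOK_runF hrec b (n - b)) (by omega) hs

end Chain

variable {Ap : Type} {φ : FLTL Ap} {w : Word Ap} {T : ℕ} {ξ : FLTL Ap}

lemma buchiAcc_mono {R R' : Set (FLTL Ap)} (h : R ⊆ R') (hb : buchiAcc R ξ w) :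
    buchiAcc R' ξ w := by
  apply hb.mono
  rintro n ⟨ψ, hmem, hsink, hp⟩
  exact ⟨ψ, hmem, hsink, pproves_mono h hp⟩

lemma coBuchiAcc_mono {R R' : Set (FLTL Ap)} (h : R ⊆ R') (hb : coBuchiAcc R ξ w) :
    coBuchiAcc R' ξ w := by
  apply hb.mono
  rintro n hn ⟨ψ, hmem, hsink, hp⟩
  exact hn ⟨ψ, hmem, hsink, fun hp' => hp (pproves_mono h hp')⟩

lemma buchi_iff_GF (hT : ThresholdProp φ w T) (hU : UFree ξ)
    (hrec : recsubOK (RecSet φ) ξ) :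
    buchiAcc (Rsat φ w) ξ w ↔ Sat (.glob (.fut ξ)) w := by
  constructor
  · intro hacc
    show ∀ k, Sat (.fut ξ) (suffixW w k)
    intro k
    obtain ⟨n, hn, ψ, hmem, hsink, hp⟩ :=
      (frequently_atTop.1 hacc) (k + htF ξ + T + htF ξ)
    rw [tokenSet_eq] at hmem
    obtain ⟨b, hbn, hts⟩ := hmem
    have hle : n - b ≤ htF ξ := tokState_sink_le hbn hts hsink
    have hTb : T ≤ b := by omega
    have hsat : Sat ξ (suffixW w b) :=
      (token_core hT hU hrec hTb hbn hts hsink).1 hp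
    show ∃ m, Sat ξ (suffixW (suffixW w k) m)
    refine ⟨b - k, ?_⟩
    rw [suffixW_suffixW, show k + (b - k) = b from by omega]
    exact hsat
  · intro hsat
    rw [buchiAcc, frequently_atTop]
    intro N
    have h1 : Sat (.fut ξ) (suffixW w (max N T)) := hsat (max N T)
    obtain ⟨m, hm⟩ := h1
    rw [suffixW_suffixW] at hm
    set b := max N T + m with hb
    obtain ⟨m₀, hm₀le, hm₀sink, hm₀min⟩ := exists_sink_time w ξ b
    have hts : tokState ξ w b (b + m₀) = some (runF w ξ b m₀) :=
      tokState_of_sink_time hm₀min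
    refine ⟨b + m₀, by omega, runF w ξ b m₀, ?_, hm₀sink, ?_⟩
    · rw [tokenSet_eq]
      exact ⟨b, by omega, hts⟩
    · exact (token_core hT hU hrec (by omega) (by omega) hts hm₀sink).2 hm

lemma coBuchi_iff_FG (hT : ThresholdProp φ w T) (hU : UFree ξ)
    (hrec : recsubOK (RecSet φ) ξ) :
    coBuchiAcc (Rsat φ w) ξ w ↔ Sat (.fut (.glob ξ)) w := by
  constructor
  · intro hacc
    obtain ⟨N₀, hN₀⟩ := eventually_atTop.1 hacc
    show ∃ k, Sat (.glob ξ) (suffixW w k)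
    refine ⟨max N₀ T, ?_⟩
    show ∀ m, Sat ξ (suffixW (suffixW w (max N₀ T)) m)
    intro m
    rw [suffixW_suffixW]
    set b := max N₀ T + m with hbdef
    obtain ⟨m₀, hm₀le, hm₀sink, hm₀min⟩ := exists_sink_time w ξ b
    have hts : tokState ξ w b (b + m₀) = some (runF w ξ b m₀) :=
      tokState_of_sink_time hm₀min
    have hmem : runF w ξ b m₀ ∈ tokenSet ξ w (b + m₀) := by
      rw [tokenSet_eq]; exact ⟨b, by omega, hts⟩
    have hp : pproves (Rsat φ w) (runF w ξ b m₀) := by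
      by_contra hnp
      exact hN₀ (b + m₀) (by omega) ⟨runF w ξ b m₀, hmem, hm₀sink, hnp⟩
    exact (token_core hT hU hrec (by omega) (by omega) hts hm₀sink).1 hp
  · intro hsat
    obtain ⟨k, hk⟩ := hsat
    have hk' : ∀ m, Sat ξ (suffixW w (k + m)) := by
      intro m
      have := hk m
      rwa [suffixW_suffixW] at this
    rw [coBuchiAcc]
    filter_upwards [eventually_ge_atTop (max k T + htF ξ)] with n hn
    rintro ⟨ψ, hmem, hsink, hnp⟩
    rw [tokenSet_eq] at hmem
    obtain ⟨b, hbn, hts⟩ := hmem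
    have hle : n - b ≤ htF ξ := tokState_sink_le hbn hts hsink
    have hTb : T ≤ b := by omega
    have hsat_b : Sat ξ (suffixW w b) := by
      have := hk' (b - k)
      rwa [show k + (b - k) = b from by omega] at this
    exact hnp ((token_core hT hU hrec hTb hbn hts hsink).2 hsat_b)


variable {Ap : Type}

lemma ind_congr {P Q : Prop} (h : P ↔ Q) : ind P = ind Q := by
  simp only [ind, h]

lemma ind_mono {P Q : Prop} (h : P → Q) : ind P ≤ ind Q := by
  simp only [ind]
  by_cases hP : P
  · simp [hP, h hP]
  · simp [hP]
    split <;> norm_num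

@[simp] lemma ind_true_iff {P : Prop} (h : P) : ind P = 1 := by simp [ind, h]
@[simp] lemma ind_false_iff {P : Prop} (h : ¬ P) : ind P = 0 := by simp [ind, h]

lemma sum_ind_le_card (s t : Finset ℕ) (P : ℕ → Prop) (h : ∀ b ∈ s, P b → b ∈ t) :
    ∑ b ∈ s, ind (P b) ≤ (t.card : ℝ) := by
  classical
  have h1 : ∑ b ∈ s, ind (P b) = ∑ b ∈ s.filter P, ind (P b) :=
    (Finset.sum_subset (Finset.filter_subset P s) (fun b hb hnb =>
      ind_false_iff fun hP => hnb (Finset.mem_filter.2 ⟨hb, hP⟩))).symm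
  have h2 : ∑ b ∈ s.filter P, ind (P b) = ((s.filter P).card : ℝ) := by
    rw [Finset.card_eq_sum_ones]
    push_cast
    exact Finset.sum_congr rfl fun b hb => ind_true_iff (Finset.mem_filter.1 hb).2
  rw [h1, h2]
  exact_mod_cast Finset.card_le_card
    (fun b hb => h b (Finset.mem_filter.1 hb).1 (Finset.mem_filter.1 hb).2)

lemma sum_ind_le_one (s : Finset ℕ) (P : ℕ → Prop)
    (h : ∀ m ∈ s, ∀ m' ∈ s, P m → P m' → m = m') : ∑ m ∈ s, ind (P m) ≤ 1 := by
  by_cases hex : ∃ m ∈ s, P m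
  · obtain ⟨m₀, hm₀, hP₀⟩ := hex
    have := sum_ind_le_card s {m₀} P (fun b hb hPb => by
      simp only [Finset.mem_singleton]
      exact h b hb m₀ hm₀ hPb hP₀)
    simpa using this
  · push_neg at hex
    rw [Finset.sum_eq_zero (fun m hm => ind_false_iff (hex m hm))]
    norm_num

lemma sum_ind_eq_one (s : Finset ℕ) (P : ℕ → Prop) (m₀ : ℕ) (hm₀ : m₀ ∈ s) (hP : P m₀)
    (huniq : ∀ m ∈ s, P m → m = m₀) : ∑ m ∈ s, ind (P m) = 1 := by
  rw [← Finset.sum_subset (Finset.singleton_subset_iff.2 hm₀)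
    (fun m hm hnm => ind_false_iff (fun hPm =>
      hnm (Finset.mem_singleton.2 (huniq m hm hPm))))]
  simp [ind_true_iff hP]

/-- The token born at `b` is, at time `n`, in an accepting sink of `S(ξ)`. -/
def AccP (R : Set (FLTL Ap)) (ξ : FLTL Ap) (w : Word Ap) (b n : ℕ) : Prop :=
  ∃ ψ, tokState ξ w b n = some ψ ∧ isSink ψ ∧ pproves R ψ

variable {R : Set (FLTL Ap)} {ξ : FLTL Ap} {w : Word Ap}

lemma summable_ind (R : Set (FLTL Ap)) (ξ : FLTL Ap) (w : Word Ap) (b n : ℕ) :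
    Summable (fun ψ : {χ : FLTL Ap // isSink χ ∧ pproves R χ} =>
      ind (tokState ξ w b n = some ψ.1)) := by
  by_cases h : AccP R ξ w b n
  · obtain ⟨ψ₀, hts, hsink, hp⟩ := h
    apply summable_of_ne_finset_zero (s := {(⟨ψ₀, hsink, hp⟩ : {χ : FLTL Ap // isSink χ ∧ pproves R χ})})
    intro ψ hψ
    apply ind_false_iff
    intro hts'
    apply hψ
    simp only [Finset.mem_singleton]
    apply Subtype.ext
    rw [hts] at hts'
    exact (Option.some_inj.1 hts').symm
  · apply summable_of_ne_finset_zero (s := ∅)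
    intro ψ _
    apply ind_false_iff
    intro hts'
    exact h ⟨ψ.1, hts', ψ.2.1, ψ.2.2⟩

lemma tsum_ind (R : Set (FLTL Ap)) (ξ : FLTL Ap) (w : Word Ap) (b n : ℕ) :
    ∑' ψ : {χ : FLTL Ap // isSink χ ∧ pproves R χ}, ind (tokState ξ w b n = some ψ.1)
      = ind (AccP R ξ w b n) := by
  by_cases h : AccP R ξ w b n
  · obtain ⟨ψ₀, hts, hsink, hp⟩ := h
    rw [tsum_eq_single (⟨ψ₀, hsink, hp⟩ : {χ : FLTL Ap // isSink χ ∧ pproves R χ})]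
    · rw [ind_true_iff hts, ind_true_iff ⟨ψ₀, hts, hsink, hp⟩]
    · intro ψ hψ
      apply ind_false_iff
      intro hts'
      apply hψ
      apply Subtype.ext
      rw [hts] at hts'
      exact (Option.some_inj.1 hts').symm
  · rw [ind_false_iff h]
    convert tsum_zero with ψ
    apply ind_false_iff
    intro hts'
    exact h ⟨ψ.1, hts', ψ.2.1, ψ.2.2⟩

lemma reward_eq (R : Set (FLTL Ap)) (ξ : FLTL Ap) (w : Word Ap) (n : ℕ) :
    mpRewardFn R (tokenCount ξ w n) = ∑ b ∈ Finset.range (n + 1), ind (AccP R ξ w b n) := by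
  unfold mpRewardFn
  have hcount : (fun ψ : {χ : FLTL Ap // isSink χ ∧ pproves R χ} =>
      ((tokenCount ξ w n ψ.1 : ℕ) : ℝ))
      = fun ψ => ∑ b ∈ Finset.range (n + 1), ind (tokState ξ w b n = some ψ.1) := by
    funext ψ
    rw [tokenCount, Finset.card_filter]
    push_cast
    apply Finset.sum_congr rfl
    intro b _
    by_cases h : tokState ξ w b n = some ψ.1 <;> simp [ind, h]
  rw [hcount, Summable.tsum_finsetSum (fun b _ => summable_ind R ξ w b n)]
  exact Finset.sum_congr rfl fun b _ => tsum_ind R ξ w b n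

lemma AccP_sub_le {b n : ℕ} (hbn : b ≤ n) (h : AccP R ξ w b n) : n - b ≤ htF ξ := by
  obtain ⟨ψ, hts, hsink, -⟩ := h
  exact tokState_sink_le hbn hts hsink

lemma AccP_unique {b m m' : ℕ} (hb : b ≤ m) (hb' : b ≤ m')
    (h : AccP R ξ w b m) (h' : AccP R ξ w b m') : m = m' := by
  obtain ⟨ψ, hts, hsink, -⟩ := h
  obtain ⟨ψ', hts', hsink', -⟩ := h'
  rw [tokState_some_iff hb] at hts
  rw [tokState_some_iff hb'] at hts'
  obtain ⟨hψ, hmin⟩ := hts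
  obtain ⟨hψ', hmin'⟩ := hts'
  subst hψ; subst hψ'
  rcases Nat.lt_trichotomy (m - b) (m' - b) with hlt | heq | hgt
  · exact absurd hsink (hmin' _ hlt)
  · omega
  · exact absurd hsink' (hmin _ hgt)

lemma reward_sum_le (R : Set (FLTL Ap)) (ξ : FLTL Ap) (w : Word Ap) (n : ℕ) :
    ∑ b ∈ Finset.range (n + 1), ind (AccP R ξ w b n) ≤ (htF ξ : ℝ) + 1 := by
  have h1 := sum_ind_le_card (Finset.range (n + 1)) (Finset.Ico (n + 1 - (htF ξ + 1)) (n + 1))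
    (fun b => AccP R ξ w b n) (fun b hb hacc => by
      rw [Finset.mem_range] at hb
      have hle : n - b ≤ htF ξ := AccP_sub_le (by omega) hacc
      rw [Finset.mem_Ico]
      omega)
  refine le_trans h1 ?_
  rw [Nat.card_Ico]
  have : n + 1 - (n + 1 - (htF ξ + 1)) ≤ htF ξ + 1 := by omega
  calc ((n + 1 - (n + 1 - (htF ξ + 1)) : ℕ) : ℝ) ≤ ((htF ξ + 1 : ℕ) : ℝ) := by exact_mod_cast this
    _ = (htF ξ : ℝ) + 1 := by push_cast; ring

section WithThreshold

variable {φ : FLTL Ap} {T : ℕ}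

lemma cb_le_one (R : Set (FLTL Ap)) (ξ : FLTL Ap) (w : Word Ap) (N b : ℕ) :
    ∑ m ∈ Finset.range N, ind (b ≤ m ∧ AccP R ξ w b m) ≤ 1 :=
  sum_ind_le_one _ _ (fun m _ m' _ hm hm' => AccP_unique hm.1 hm'.1 hm.2 hm'.2)

lemma cb_nonneg (R : Set (FLTL Ap)) (ξ : FLTL Ap) (w : Word Ap) (N b : ℕ) :
    0 ≤ ∑ m ∈ Finset.range N, ind (b ≤ m ∧ AccP R ξ w b m) :=
  Finset.sum_nonneg fun m _ => ind_nonneg _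

lemma cb_eq_good (hT : ThresholdProp φ w T) (hU : UFree ξ) (hrec : recsubOK (RecSet φ) ξ)
    {N b : ℕ} (hTb : T ≤ b) (hgood : b + htF ξ < N) :
    ∑ m ∈ Finset.range N, ind (b ≤ m ∧ AccP (Rsat φ w) ξ w b m)
      = ind (Sat ξ (suffixW w b)) := by
  obtain ⟨m₀, hm₀le, hm₀sink, hm₀min⟩ := exists_sink_time w ξ b
  have hts : tokState ξ w b (b + m₀) = some (runF w ξ b m₀) := tokState_of_sink_time hm₀min
  have hcore := token_core hT hU hrec hTb (by omega) hts hm₀sink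
  by_cases hs : Sat ξ (suffixW w b)
  · rw [ind_true_iff hs]
    exact sum_ind_eq_one _ _ (b + m₀) (Finset.mem_range.2 (by omega))
      ⟨by omega, ⟨_, hts, hm₀sink, hcore.2 hs⟩⟩
      (fun m _ hm => AccP_unique hm.1 (by omega) hm.2 ⟨_, hts, hm₀sink, hcore.2 hs⟩)
  · rw [ind_false_iff hs]
    apply Finset.sum_eq_zero
    intro m _
    apply ind_false_iff
    rintro ⟨hbm, ψ, hts', hsink', hp'⟩
    exact hs ((token_core hT hU hrec hTb hbm hts' hsink').1 hp')

lemma partial_close (hT : ThresholdProp φ w T) (hU : UFree ξ) (hrec : recsubOK (RecSet φ) ξ)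
    (N : ℕ) :
    |∑ m ∈ Finset.range N, (∑ b ∈ Finset.range (m + 1), ind (AccP (Rsat φ w) ξ w b m))
      - ∑ b ∈ Finset.range N, ind (Sat ξ (suffixW w b))| ≤ (T : ℝ) + (htF ξ : ℝ) + 1 := by
  -- Step A: swap the double sum
  have hA : ∑ m ∈ Finset.range N, (∑ b ∈ Finset.range (m + 1), ind (AccP (Rsat φ w) ξ w b m))
      = ∑ b ∈ Finset.range N, ∑ m ∈ Finset.range N, ind (b ≤ m ∧ AccP (Rsat φ w) ξ w b m) := by
    rw [← Finset.sum_comm]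
    apply Finset.sum_congr rfl
    intro m hm
    rw [Finset.mem_range] at hm
    rw [← Finset.sum_subset (Finset.range_subset_range.2 (by omega : m + 1 ≤ N))]
    · apply Finset.sum_congr rfl
      intro b hb
      rw [Finset.mem_range] at hb
      exact ind_congr (by
        constructor
        · intro h; exact ⟨by omega, h⟩
        · intro h; exact h.2)
    · intro b _ hb
      rw [Finset.mem_range] at hb
      apply ind_false_iff
      rintro ⟨hbm, -⟩
      omega
  rw [hA]
  -- Step B: per-b difference
  have hB : ∀ b ∈ Finset.range N,
      |∑ m ∈ Finset.range N, ind (b ≤ m ∧ AccP (Rsat φ w) ξ w b m) - ind (Sat ξ (suffixW w b))|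
        ≤ ind (¬ (T ≤ b ∧ b + htF ξ < N)) := by
    intro b _
    by_cases hgood : T ≤ b ∧ b + htF ξ < N
    · rw [cb_eq_good hT hU hrec hgood.1 hgood.2, sub_self, abs_zero, ind]
      split <;> norm_num
    · rw [ind_true_iff hgood]
      rw [abs_le]
      constructor
      · have h1 := cb_nonneg (Rsat φ w) ξ w N b
        have h2 := ind_le_one (Sat ξ (suffixW w b))
        linarith
      · have h1 := cb_le_one (Rsat φ w) ξ w N b
        have h2 := ind_nonneg (Sat ξ (suffixW w b))
        linarith
  -- Step C: combine
  calc |∑ b ∈ Finset.range N, ∑ m ∈ Finset.range N, ind (b ≤ m ∧ AccP (Rsat φ w) ξ w b m)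
      - ∑ b ∈ Finset.range N, ind (Sat ξ (suffixW w b))|
      = |∑ b ∈ Finset.range N, (∑ m ∈ Finset.range N, ind (b ≤ m ∧ AccP (Rsat φ w) ξ w b m)
          - ind (Sat ξ (suffixW w b)))| := by rw [Finset.sum_sub_distrib]
    _ ≤ ∑ b ∈ Finset.range N, |∑ m ∈ Finset.range N, ind (b ≤ m ∧ AccP (Rsat φ w) ξ w b m)
          - ind (Sat ξ (suffixW w b))| := Finset.abs_sum_le_sum_abs _ _
    _ ≤ ∑ b ∈ Finset.range N, ind (¬ (T ≤ b ∧ b + htF ξ < N)) := Finset.sum_le_sum hB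
    _ ≤ (T : ℝ) + (htF ξ : ℝ) + 1 := by
        have h1 := sum_ind_le_card (Finset.range N)
          (Finset.range (min T N) ∪ Finset.Ico (N - (htF ξ + 1)) N)
          (fun b => ¬ (T ≤ b ∧ b + htF ξ < N))
          (fun b hb hbad => by
            rw [Finset.mem_range] at hb
            simp only [Finset.mem_union, Finset.mem_range, Finset.mem_Ico, lt_min_iff]
            omega)
        refine le_trans h1 ?_
        have h2 : (Finset.range (min T N) ∪ Finset.Ico (N - (htF ξ + 1)) N).card
            ≤ T + (htF ξ + 1) := by
          refine le_trans (Finset.card_union_le _ _) ?_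
          rw [Finset.card_range, Nat.card_Ico]
          omega
        calc ((Finset.range (min T N) ∪ Finset.Ico (N - (htF ξ + 1)) N).card : ℝ)
            ≤ ((T + (htF ξ + 1) : ℕ) : ℝ) := by exact_mod_cast h2
          _ = (T : ℝ) + (htF ξ : ℝ) + 1 := by push_cast; ring

lemma lr_reward_eq (hT : ThresholdProp φ w T) (hU : UFree ξ) (hrec : recsubOK (RecSet φ) ξ)
    (e : Ext) :
    lr e (fun n => mpRewardFn (Rsat φ w) (tokenCount ξ w n))
      = lr e (fun i => ind (Sat ξ (suffixW w i))) := by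
  have hre : (fun n => mpRewardFn (Rsat φ w) (tokenCount ξ w n))
      = fun n => ∑ b ∈ Finset.range (n + 1), ind (AccP (Rsat φ w) ξ w b n) :=
    funext fun n => reward_eq _ _ _ n
  rw [hre]
  apply lr_eq_of_partial_close (B := (htF ξ : ℝ) + 1)
    (fun n => Finset.sum_nonneg fun b _ => ind_nonneg _)
    (fun n => reward_sum_le _ _ _ n)
    (fun i => ind_nonneg _)
    (fun i => le_trans (ind_le_one _) ((le_add_iff_nonneg_left 1).2 (Nat.cast_nonneg _)))
    ((T : ℝ) + (htF ξ : ℝ) + 1)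
    (fun n => partial_close hT hU hrec n) e

lemma mp_iff (hT : ThresholdProp φ w T) (hU : UFree ξ) (hrec : recsubOK (RecSet φ) ξ)
    (e : Ext) (c : Cmp) (p : ℚ) :
    mpAcc (Rsat φ w) ξ w e c p ↔ Sat (.freq e c p ξ) w := by
  unfold mpAcc
  rw [lr_reward_eq hT hU hrec e]
  rfl

end WithThreshold

lemma Cmp.rel_mono {c : Cmp} {x y p : ℝ} (hxy : x ≤ y) (h : c.rel x p) : c.rel y p := by
  cases c
  · exact le_trans h hxy
  · exact lt_of_lt_of_le h hxy

lemma lr_mono {u v : ℕ → ℝ} {B : ℝ} (h : ∀ n, u n ≤ v n) (hu0 : ∀ n, 0 ≤ u n)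
    (hvB : ∀ n, v n ≤ B) (e : Ext) : lr e u ≤ lr e v := by
  have hces : ∀ n, cesaro u n ≤ cesaro v n := by
    intro n
    unfold cesaro
    gcongr
    exact h _
  have hB0 : (0:ℝ) ≤ B := le_trans (hu0 0) (le_trans (h 0) (hvB 0))
  cases e
  · exact liminf_le_liminf_of_le hces (cesaro_nonneg hu0) (cesaro_le hB0 hvB)
  · exact limsup_le_limsup_of_le hces (cesaro_nonneg hu0) (cesaro_le hB0 hvB)

lemma mpAcc_mono {R R' : Set (FLTL Ap)} (h : R ⊆ R') {e c p} (hacc : mpAcc R ξ w e c p) :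
    mpAcc R' ξ w e c p := by
  unfold mpAcc at *
  apply Cmp.rel_mono ?_ hacc
  apply lr_mono (B := (htF ξ : ℝ) + 1)
  · intro n
    rw [reward_eq, reward_eq]
    apply Finset.sum_le_sum
    intro b _
    apply ind_mono
    rintro ⟨ψ, hts, hsink, hp⟩
    exact ⟨ψ, hts, hsink, pproves_mono h hp⟩
  · intro n
    rw [reward_eq]
    exact Finset.sum_nonneg fun b _ => ind_nonneg _
  · intro n
    rw [reward_eq]
    exact reward_sum_le _ _ _ n


/-- Lemma 4 (correctness of the slave automata). -/
theorem slaves_correct {Ap : Type} [Fintype Ap] (φ : FLTL Ap) (hφ : InFrag φ)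
    (ξ : FLTL Ap) (hξ : ξ ∈ sfSet φ) (hU : UFree ξ) (w : Word Ap)
    (Rlo Rhi : Set (FLTL Ap)) (hloRec : Rlo ⊆ RecSet φ) (hhiRec : Rhi ⊆ RecSet φ)
    (hlo : Rlo ⊆ Rsat φ w) (hhi : Rsat φ w ⊆ Rhi) :
    ((buchiAcc Rlo ξ w → Sat (.glob (.fut ξ)) w) ∧
      (Sat (.glob (.fut ξ)) w → buchiAcc Rhi ξ w)) ∧
    ((coBuchiAcc Rlo ξ w → Sat (.fut (.glob ξ)) w) ∧
      (Sat (.fut (.glob ξ)) w → coBuchiAcc Rhi ξ w)) ∧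
    (∀ (e : Ext) (c : Cmp) (p : ℚ),
      (mpAcc Rlo ξ w e c p → Sat (.freq e c p ξ) w) ∧
      (Sat (.freq e c p ξ) w → mpAcc Rhi ξ w e c p)) := by
  obtain ⟨T, hT⟩ := exists_threshold φ w
  have hrec : recsubOK (RecSet φ) ξ := fun χ' hχ' hsh => ⟨subf_trans hξ.1 hχ', hsh⟩
  refine ⟨⟨?_, ?_⟩, ⟨?_, ?_⟩, ?_⟩
  · intro h; exact (buchi_iff_GF hT hU hrec).1 (buchiAcc_mono hlo h)
  · intro h; exact buchiAcc_mono hhi ((buchi_iff_GF hT hU hrec).2 h)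
  · intro h; exact (coBuchi_iff_FG hT hU hrec).1 (coBuchiAcc_mono hlo h)
  · intro h; exact coBuchiAcc_mono hhi ((coBuchi_iff_FG hT hU hrec).2 h)
  · intro e c p
    exact ⟨fun h => (mp_iff hT hU hrec e c p).1 (mpAcc_mono hlo h),
      fun h => mpAcc_mono hhi ((mp_iff hT hU hrec e c p).2 h)⟩

end Paper

end
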